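/- Let m¹, m² > 0 and d¹, d² ∈ [0,1), and define the responsive-switching mean matrices M(1) := [[m¹, 0], [1−d¹, 0]] and M(2) := [[0, m²], [0, 1−d²]]. Then, ℙ-almost surely, (1/n) · log‖M(I_1)·M(I_2)·…·M(I_n)‖ converges, as n → ∞, to ( s₂·log m¹ + s₁·log(1−d²) + s₁s₂·log( m²(1−d¹) / (m¹(1−d²)) ) ) / (s₁+s₂). -/

import Mathlib

open MeasureTheory Filter Topology

/-- The entrywise sum-of-absolute-values "norm" of a real matrix. -/
noncomputable def matNorm {m n : Type*} [Fintype m] [Fintype n] (M : Matrix m n ℝ) : ℝ :=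
  ∑ i, ∑ j, |M i j|

/-- The stationary distribution π = (s₂/(s₁+s₂), s₁/(s₁+s₂)) of the binary environment
(environment state "1" is index 0, state "2" is index 1). -/
noncomputable def envPi (s : Fin 2 → ℝ) : Fin 2 → ℝ :=
  ![s 1 / (s 0 + s 1), s 0 / (s 0 + s 1)]

/-- The transition matrix P of the binary environment. -/
noncomputable def envP (s : Fin 2 → ℝ) : Matrix (Fin 2) (Fin 2) ℝ :=
  !![1 - s 0, s 0; s 1, 1 - s 1]



open Function Matrix

set_option linter.unusedSectionVars false

section ErgodicTheory

variable {Ω : Type*} [MeasurableSpace Ω] {μ : Measure Ω} [IsProbabilityMeasure μ]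
  {T : Ω → Ω} {f : Ω → ℝ}



variable {Ω : Type*} [MeasurableSpace Ω] {μ : Measure Ω} [IsProbabilityMeasure μ]
  {T : Ω → Ω} {f : Ω → ℝ}

/-- The running maximum `F n ω = max (0, max_{1 ≤ k ≤ n} birkhoffSum T f k ω)`,
defined recursively. -/
noncomputable def maxF (T : Ω → Ω) (f : Ω → ℝ) : ℕ → Ω → ℝ
  | 0 => fun _ => 0
  | (N+1) => fun ω => max 0 (f ω + maxF T f N (T ω))

lemma maxF_nonneg (N : ℕ) (ω : Ω) : 0 ≤ maxF T f N ω := by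
  cases N with
  | zero => simp [maxF]
  | succ N => exact le_max_left _ _

lemma maxF_mono (N : ℕ) (ω : Ω) : maxF T f N ω ≤ maxF T f (N + 1) ω := by
  induction N generalizing ω with
  | zero => exact maxF_nonneg 1 ω
  | succ N ih =>
    simp only [maxF]
    exact max_le_max le_rfl (add_le_add le_rfl (ih (T ω)))

lemma maxF_measurable (hT : Measurable T) (hf : Measurable f) (N : ℕ) :
    Measurable (maxF T f N) := by
  induction N with
  | zero => simpa [maxF] using measurable_const
  | succ N ih =>
    exact measurable_const.max (hf.add (ih.comp hT))

lemma maxF_bound {C : ℝ} (hC : 0 ≤ C) (hf : ∀ ω, |f ω| ≤ C) (N : ℕ) (ω : Ω) :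
    |maxF T f N ω| ≤ N * C := by
  induction N generalizing ω with
  | zero => simp [maxF]
  | succ N ih =>
    have h1 : f ω + maxF T f N (T ω) ≤ (N + 1) * C := by
      have := (abs_le.mp (hf ω)).2
      have := (abs_le.mp (ih (T ω))).2
      push_cast; nlinarith
    have h0 : (0:ℝ) ≤ (N + 1 : ℕ) * C := by positivity
    rw [abs_le]
    constructor
    · linarith [maxF_nonneg (T := T) (f := f) (N+1) ω]
    · simp only [maxF]
      rw [max_le_iff]
      exact ⟨h0, by push_cast at h1 ⊢; linarith⟩

lemma birkhoffSum_le_maxF (N : ℕ) : ∀ n ≤ N, ∀ ω : Ω, birkhoffSum T f n ω ≤ maxF T f N ω := by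
  induction N with
  | zero =>
    intro n hn ω
    interval_cases n
    simp [maxF]
  | succ N ih =>
    intro n hn ω
    cases n with
    | zero => simpa [birkhoffSum] using maxF_nonneg (T := T) (f := f) (N+1) ω
    | succ m =>
      rw [birkhoffSum_succ']
      have : birkhoffSum T f m (T ω) ≤ maxF T f N (T ω) := ih m (by omega) (T ω)
      calc f ω + birkhoffSum T f m (T ω) ≤ f ω + maxF T f N (T ω) := by linarith
        _ ≤ maxF T f (N+1) ω := le_max_right _ _

lemma maxF_le_birkhoffSum (N : ℕ) (ω : Ω) : ∃ n, maxF T f N ω ≤ birkhoffSum T f n ω := by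
  induction N generalizing ω with
  | zero => exact ⟨0, by simp [maxF, birkhoffSum]⟩
  | succ N ih =>
    rcases le_or_gt (maxF T f (N+1) ω) 0 with h | h
    · exact ⟨0, by simpa [birkhoffSum] using h⟩
    · have heq : maxF T f (N+1) ω = f ω + maxF T f N (T ω) := by
        simp only [maxF] at h ⊢
        rcases max_cases (0:ℝ) (f ω + maxF T f N (T ω)) with ⟨h1, h2⟩ | ⟨h1, h2⟩
        · rw [h1] at h; linarith
        · exact h1
      obtain ⟨n, hn⟩ := ih (T ω)
      exact ⟨n + 1, by rw [birkhoffSum_succ', heq]; linarith⟩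

/-- Maximal ergodic theorem (Garsia's proof). -/
theorem maximal_ergodic (hT : MeasurePreserving T μ μ) (hfm : Measurable f)
    {C : ℝ} (hC : 0 ≤ C) (hfb : ∀ ω, |f ω| ≤ C) :
    0 ≤ ∫ ω, Set.indicator {ω | ∃ n, 0 < birkhoffSum T f n ω} f ω ∂μ := by
  have hTm : Measurable T := hT.measurable
  have hfi : Integrable f μ :=
    (integrable_const C).mono' hfm.aestronglyMeasurable (Eventually.of_forall hfb)
  have hFm : ∀ N, Measurable (maxF T f N) := maxF_measurable hTm hfm
  have hFi : ∀ N, Integrable (maxF T f N) μ := fun N =>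
    (integrable_const ((N : ℝ) * C)).mono' (hFm N).aestronglyMeasurable
      (Eventually.of_forall (maxF_bound hC hfb N))
  -- sets A_N
  set A : ℕ → Set Ω := fun N => {ω | 0 < maxF T f N ω} with hA
  have hAm : ∀ N, MeasurableSet (A N) := fun N => measurableSet_lt measurable_const (hFm N)
  -- step 1: for each N, ∫ indicator (A (N+1)) f ≥ 0
  have step1 : ∀ N : ℕ, 0 ≤ ∫ ω, Set.indicator (A (N+1)) f ω ∂μ := by
    intro N
    have key : ∀ ω, maxF T f (N+1) ω - maxF T f (N+1) (T ω) ≤ Set.indicator (A (N+1)) f ω := by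
      intro ω
      by_cases hω : ω ∈ A (N+1)
      · rw [Set.indicator_of_mem hω]
        have hpos : 0 < maxF T f (N+1) ω := hω
        have heq : maxF T f (N+1) ω = f ω + maxF T f N (T ω) := by
          simp only [maxF] at hpos ⊢
          rcases max_cases (0:ℝ) (f ω + maxF T f N (T ω)) with ⟨h1, h2⟩ | ⟨h1, h2⟩
          · rw [h1] at hpos; linarith
          · exact h1
        have := maxF_mono (T := T) (f := f) N (T ω)
        linarith
      · rw [Set.indicator_of_notMem hω]
        have h0 : maxF T f (N+1) ω ≤ 0 := not_lt.mp hω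
        have := maxF_nonneg (T := T) (f := f) (N+1) (T ω)
        linarith
    have hcompi : Integrable (fun ω => maxF T f (N+1) (T ω)) μ :=
      (hT.integrable_comp (hFm (N+1)).aestronglyMeasurable).mpr (hFi (N+1))
    have hind : Integrable (Set.indicator (A (N+1)) f) μ := (hfi.indicator (hAm (N+1)))
    have hint : ∫ ω, (maxF T f (N+1) ω - maxF T f (N+1) (T ω)) ∂μ = 0 := by
      rw [integral_sub (hFi (N+1)) hcompi]
      have : ∫ ω, maxF T f (N+1) (T ω) ∂μ = ∫ ω, maxF T f (N+1) ω ∂μ := by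
        rw [← MeasureTheory.integral_map hTm.aemeasurable (hFm (N+1)).aestronglyMeasurable,
          hT.map_eq]
      rw [this]; ring
    calc (0:ℝ) = ∫ ω, (maxF T f (N+1) ω - maxF T f (N+1) (T ω)) ∂μ := hint.symm
      _ ≤ ∫ ω, Set.indicator (A (N+1)) f ω ∂μ :=
        integral_mono ((hFi (N+1)).sub hcompi) hind key
  -- step 2: limit N → ∞
  have hAuni : {ω | ∃ n, 0 < birkhoffSum T f n ω} = ⋃ N, A N := by
    ext ω
    simp only [Set.mem_setOf_eq, Set.mem_iUnion]
    constructor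
    · rintro ⟨n, hn⟩
      exact ⟨n, lt_of_lt_of_le hn (birkhoffSum_le_maxF n n le_rfl ω)⟩
    · rintro ⟨N, hN⟩
      obtain ⟨n, hn⟩ := maxF_le_birkhoffSum (T := T) (f := f) N ω
      exact ⟨n, lt_of_lt_of_le hN hn⟩
  have hmono : ∀ N M, N ≤ M → ∀ ω, ω ∈ A N → ω ∈ A M := by
    intro N M hNM ω h
    have hle : maxF T f N ω ≤ maxF T f M ω := by
      clear h
      induction hNM with
      | refl => exact le_rfl
      | step h ih => exact le_trans ih (maxF_mono _ ω)
    exact lt_of_lt_of_le h hle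
  have hlim : Tendsto (fun N => ∫ ω, Set.indicator (A (N+1)) f ω ∂μ) atTop
      (𝓝 (∫ ω, Set.indicator {ω | ∃ n, 0 < birkhoffSum T f n ω} f ω ∂μ)) := by
    apply tendsto_integral_of_dominated_convergence (fun ω => C)
    · exact fun N => (hfm.indicator (hAm (N+1))).aestronglyMeasurable
    · exact integrable_const C
    · intro N
      refine Eventually.of_forall fun ω => ?_
      rw [Real.norm_eq_abs]
      refine le_trans ?_ (hfb ω)
      by_cases h : ω ∈ A (N+1)
      · rw [Set.indicator_of_mem h]
      · rw [Set.indicator_of_notMem h]; simpa using abs_nonneg (f ω)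
    · refine Eventually.of_forall fun ω => ?_
      rw [hAuni]
      have hev : ∀ᶠ N in atTop,
          (fun _ : ℕ => Set.indicator (⋃ N, A N) f ω) N = Set.indicator (A (N+1)) f ω := by
        by_cases hω : ω ∈ ⋃ N, A N
        · obtain ⟨N₀, hN₀⟩ := Set.mem_iUnion.mp hω
          filter_upwards [eventually_ge_atTop N₀] with N hN
          rw [Set.indicator_of_mem hω, Set.indicator_of_mem (hmono N₀ (N+1) (by omega) ω hN₀)]
        · refine Eventually.of_forall fun N => ?_
          rw [Set.indicator_of_notMem hω, Set.indicator_of_notMem]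
          intro h; exact hω (Set.mem_iUnion.mpr ⟨N+1, h⟩)
      exact Tendsto.congr' hev tendsto_const_nhds
  exact ge_of_tendsto' hlim step1

/-- The set where some Birkhoff average exceeds rate `c` infinitely often. -/
def Bset (T : Ω → Ω) (f : Ω → ℝ) (c : ℝ) : Set Ω :=
  {ω | ∃ q : ℚ, c < (q : ℝ) ∧ ∀ N : ℕ, ∃ n, N ≤ n ∧ (q : ℝ) * n ≤ birkhoffSum T f n ω}

lemma birkhoffSum_measurable (hT : Measurable T) (hf : Measurable f) (n : ℕ) :
    Measurable (birkhoffSum T f n) := by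
  unfold birkhoffSum
  exact Finset.measurable_sum _ fun k _ => hf.comp (hT.iterate k)

lemma Bset_measurable (hT : Measurable T) (hf : Measurable f) (c : ℝ) :
    MeasurableSet (Bset T f c) := by
  have : Bset T f c = ⋃ (q : ℚ), ⋃ (_ : c < (q:ℝ)), ⋂ (N : ℕ), ⋃ (n : ℕ), ⋃ (_ : N ≤ n),
      {ω | (q : ℝ) * n ≤ birkhoffSum T f n ω} := by
    ext ω
    simp only [Bset, Set.mem_setOf_eq, Set.mem_iUnion, Set.mem_iInter, Set.mem_setOf_eq]
    constructor
    · rintro ⟨q, hq, h⟩; exact ⟨q, hq, fun N => by obtain ⟨n, h1, h2⟩ := h N; exact ⟨n, h1, h2⟩⟩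
    · rintro ⟨q, hq, h⟩; exact ⟨q, hq, fun N => by obtain ⟨n, h1, h2⟩ := h N; exact ⟨n, h1, h2⟩⟩
  rw [this]
  refine MeasurableSet.iUnion fun q => MeasurableSet.iUnion fun _ => MeasurableSet.iInter
    fun N => MeasurableSet.iUnion fun n => MeasurableSet.iUnion fun _ => ?_
  exact measurableSet_le measurable_const (birkhoffSum_measurable hT hf n)

lemma Bset_invariant (c : ℝ) : T ⁻¹' (Bset T f c) = Bset T f c := by
  ext ω
  simp only [Set.mem_preimage, Bset, Set.mem_setOf_eq]
  constructor
  · rintro ⟨q, hq, hfreq⟩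
    obtain ⟨q', hq'1, hq'2⟩ := exists_rat_btwn hq
    refine ⟨q', hq'1, fun N => ?_⟩
    have hd : (0:ℝ) < (q : ℝ) - q' := by linarith
    obtain ⟨n₁, hn₁⟩ := exists_nat_ge (((q' : ℝ) - f ω) / ((q : ℝ) - q'))
    have hn₁' : (q' : ℝ) - f ω ≤ ((q : ℝ) - q') * n₁ := by
      rw [div_le_iff₀ hd] at hn₁; linarith
    obtain ⟨n, hnge, hn⟩ := hfreq (max N n₁)
    have hS : birkhoffSum T f n (T ω) = birkhoffSum T f (n + 1) ω - f ω := by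
      rw [birkhoffSum_succ']; ring
    refine ⟨n + 1, by omega, ?_⟩
    have hnn₁ : (n₁ : ℝ) ≤ n := by exact_mod_cast le_trans (le_max_right N n₁) hnge
    have : ((q:ℝ) - q') * n₁ ≤ ((q:ℝ) - q') * n := by nlinarith
    rw [hS] at hn
    push_cast
    nlinarith
  · rintro ⟨q, hq, hfreq⟩
    obtain ⟨q', hq'1, hq'2⟩ := exists_rat_btwn hq
    refine ⟨q', hq'1, fun N => ?_⟩
    have hd : (0:ℝ) < (q : ℝ) - q' := by linarith
    obtain ⟨n₁, hn₁⟩ := exists_nat_ge ((f ω - (q' : ℝ)) / ((q : ℝ) - q'))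
    have hn₁' : f ω - (q' : ℝ) ≤ ((q : ℝ) - q') * n₁ := by
      rw [div_le_iff₀ hd] at hn₁; linarith
    obtain ⟨n, hnge, hn⟩ := hfreq (max (N + 1) n₁)
    obtain ⟨m, rfl⟩ : ∃ m, n = m + 1 := ⟨n - 1, by omega⟩
    have hS : birkhoffSum T f m (T ω) = birkhoffSum T f (m + 1) ω - f ω := by
      rw [birkhoffSum_succ']; ring
    refine ⟨m, by omega, ?_⟩
    have hnn₁ : (n₁ : ℝ) ≤ m + 1 := by
      have : n₁ ≤ m + 1 := le_trans (le_max_right _ _) hnge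
      exact_mod_cast this
    have : ((q:ℝ) - q') * n₁ ≤ ((q:ℝ) - q') * (m + 1) := by nlinarith
    rw [hS]
    push_cast at hn ⊢
    nlinarith

lemma Bset_null (hT : Ergodic T μ) (hfm : Measurable f)
    {C : ℝ} (hC : 0 ≤ C) (hfb : ∀ ω, |f ω| ≤ C) {ε : ℝ} (hε : 0 < ε) :
    μ (Bset T f ((∫ x, f x ∂μ) + ε)) = 0 := by
  set c : ℝ := (∫ x, f x ∂μ) + ε with hc
  rcases hT.prob_eq_zero_or_one (Bset_measurable hT.toMeasurePreserving.measurable hfm c)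
    (Bset_invariant c) with h | h
  · exact h
  · exfalso
    set g : Ω → ℝ := fun ω => f ω - c with hg
    have hgm : Measurable g := hfm.sub measurable_const
    have hgb : ∀ ω, |g ω| ≤ C + |c| := fun ω => by
      have := hfb ω
      simp only [hg]
      calc |f ω - c| ≤ |f ω| + |c| := abs_sub _ _
        _ ≤ C + |c| := by linarith
    have hSg : ∀ n ω, birkhoffSum T g n ω = birkhoffSum T f n ω - n * c := by
      intro n ω
      simp only [birkhoffSum, hg, Finset.sum_sub_distrib, Finset.sum_const, Finset.card_range,
        nsmul_eq_mul]
    have hsub : Bset T f c ⊆ {ω | ∃ n, 0 < birkhoffSum T g n ω} := by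
      rintro ω ⟨q, hq, hfreq⟩
      obtain ⟨n, hn1, hn2⟩ := hfreq 1
      refine ⟨n, ?_⟩
      rw [hSg]
      have hn' : (1:ℝ) ≤ n := by exact_mod_cast hn1
      nlinarith
    set A := {ω | ∃ n, 0 < birkhoffSum T g n ω} with hA
    have hBc : μ (Bset T f c)ᶜ = 0 := by
      rw [measure_compl (Bset_measurable hT.toMeasurePreserving.measurable hfm c) (measure_ne_top μ _), h,
        measure_univ, tsub_self]
    have hAc : μ Aᶜ = 0 := measure_mono_null (Set.compl_subset_compl.mpr hsub) hBc
    have hae : Set.indicator A g =ᵐ[μ] g := by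
      have : ∀ᵐ ω ∂μ, ω ∈ A := by
        rw [ae_iff]
        exact hAc
      filter_upwards [this] with ω hω
      exact Set.indicator_of_mem hω g
    have hint : ∫ ω, Set.indicator A g ω ∂μ = -ε := by
      rw [integral_congr_ae hae]
      have hgi : Integrable g μ := by
        refine (integrable_const C).mono' hfm.aestronglyMeasurable (Eventually.of_forall hfb)
          |>.sub (integrable_const c)
      rw [hg]
      simp only
      rw [integral_sub ((integrable_const C).mono' hfm.aestronglyMeasurable
        (Eventually.of_forall hfb)) (integrable_const c), integral_const]
      simp [hc]
    have := maximal_ergodic hT.toMeasurePreserving hgm (by positivity) hgb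
    rw [hint] at this
    linarith

theorem birkhoff_bounded (hT : Ergodic T μ) (hfm : Measurable f)
    {C : ℝ} (hC : 0 ≤ C) (hfb : ∀ ω, |f ω| ≤ C) :
    ∀ᵐ ω ∂μ, Tendsto (fun n : ℕ => birkhoffSum T f n ω / n) atTop (𝓝 (∫ x, f x ∂μ)) := by
  set I : ℝ := ∫ x, f x ∂μ with hI
  have hnm : Measurable (fun ω => -(f ω)) := hfm.neg
  have hnb : ∀ ω, |(-(f ω))| ≤ C := fun ω => by rw [abs_neg]; exact hfb ω
  have hnI : (∫ x, -(f x) ∂μ) = -I := by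
    rw [integral_neg]
  have h1 : ∀ᵐ ω ∂μ, ∀ k : ℕ, ω ∉ Bset T f (I + 1 / (k + 1)) := by
    rw [ae_all_iff]
    intro k
    have := Bset_null hT hfm hC hfb (ε := 1 / (k + 1)) (by positivity)
    rw [ae_iff]
    simpa using this
  have h2 : ∀ᵐ ω ∂μ, ∀ k : ℕ, ω ∉ Bset T (fun ω => -(f ω)) (-I + 1 / (k + 1)) := by
    rw [ae_all_iff]
    intro k
    have := Bset_null hT hnm hC hnb (ε := 1 / (k + 1)) (by positivity)
    rw [hnI] at this
    rw [ae_iff]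
    simpa using this
  filter_upwards [h1, h2] with ω hω1 hω2
  rw [Metric.tendsto_atTop]
  intro ε hε
  obtain ⟨k, hk⟩ := exists_nat_one_div_lt (half_pos hε)
  set δ : ℝ := 1 / (k + 1) with hδ
  have hδpos : 0 < δ := by positivity
  have hδε : 2 * δ < ε := by
    rw [hδ]
    push_cast at hk ⊢
    linarith
  -- upper bound
  have hub : ∃ N : ℕ, ∀ n ≥ N, birkhoffSum T f n ω < (I + 2*δ) * n := by
    obtain ⟨q, hq1, hq2⟩ := exists_rat_btwn (show I + δ < I + 2*δ by linarith)
    by_contra hcon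
    push_neg at hcon
    refine hω1 k ⟨q, hq1, fun N => ?_⟩
    obtain ⟨n, hn1, hn2⟩ := hcon N
    refine ⟨n, hn1, ?_⟩
    have hn0 : (0:ℝ) ≤ (n:ℝ) := by positivity
    nlinarith
  have hlb : ∃ N : ℕ, ∀ n ≥ N, (I - 2*δ) * n < birkhoffSum T f n ω := by
    obtain ⟨q, hq1, hq2⟩ := exists_rat_btwn (show -I + δ < -I + 2*δ by linarith)
    by_contra hcon
    push_neg at hcon
    refine hω2 k ⟨q, hq1, fun N => ?_⟩
    obtain ⟨n, hn1, hn2⟩ := hcon N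
    refine ⟨n, hn1, ?_⟩
    have hSn : birkhoffSum T (fun ω => -(f ω)) n ω = - birkhoffSum T f n ω := by
      simp [birkhoffSum]
    rw [hSn]
    have hn0 : (0:ℝ) ≤ (n:ℝ) := by positivity
    nlinarith
  obtain ⟨N₁, hN₁⟩ := hub
  obtain ⟨N₂, hN₂⟩ := hlb
  refine ⟨max (max N₁ N₂) 1, fun n hn => ?_⟩
  have hn1 : 1 ≤ n := le_trans (le_max_right _ _) hn
  have hnpos : (0:ℝ) < n := by exact_mod_cast hn1
  have h1' := hN₁ n (le_trans (le_max_left _ _) (le_trans (le_max_left _ _) hn))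
  have h2' := hN₂ n (le_trans (le_max_right _ _) (le_trans (le_max_left _ _) hn))
  have hu : birkhoffSum T f n ω / n < I + 2*δ := by
    rw [div_lt_iff₀ hnpos]; linarith
  have hl : I - 2*δ < birkhoffSum T f n ω / n := by
    rw [lt_div_iff₀ hnpos]; linarith
  rw [Real.dist_eq, abs_lt]
  constructor <;> linarith


end ErgodicTheory

lemma vecMulVec_mul_vecMulVec' (a b c d : Fin 2 → ℝ) :
    (Matrix.vecMulVec a b) * (Matrix.vecMulVec c d) = (b ⬝ᵥ c) • Matrix.vecMulVec a d := by
  ext i j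
  simp only [Matrix.mul_apply, Matrix.vecMulVec_apply, Matrix.smul_apply, dotProduct,
    smul_eq_mul, Finset.sum_mul]
  exact Finset.sum_congr rfl fun k _ => by ring

lemma matNorm_smul_vecMulVec (t : ℝ) (a b : Fin 2 → ℝ) :
    matNorm (t • Matrix.vecMulVec a b) = |t| * ((∑ i, |a i|) * (∑ j, |b j|)) := by
  simp only [matNorm, Matrix.smul_apply, Matrix.vecMulVec_apply, smul_eq_mul, abs_mul,
    Fin.sum_univ_two]
  ring

lemma prod_formula (M : Fin 2 → Matrix (Fin 2) (Fin 2) ℝ) (v w : Fin 2 → Fin 2 → ℝ)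
    (hM : ∀ i, M i = Matrix.vecMulVec (v i) (w i)) (a : ℕ → Fin 2) (n : ℕ) :
    ((List.range (n+1)).map (fun k => M (a k))).prod
      = (∏ k ∈ Finset.range n, (w (a k)) ⬝ᵥ (v (a (k+1)))) •
          Matrix.vecMulVec (v (a 0)) (w (a n)) := by
  induction n with
  | zero =>
    rw [show List.range 1 = [0] from rfl, List.map_cons, List.map_nil, List.prod_cons, List.prod_nil, mul_one,
      hM (a 0)]
    simp
  | succ n ih =>
    rw [List.range_succ, List.map_append, List.prod_append, ih]
    simp only [List.map_cons, List.map_nil, List.prod_cons, List.prod_nil, mul_one]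
    rw [hM (a (n+1)), Matrix.smul_mul, vecMulVec_mul_vecMulVec', Finset.prod_range_succ,
      smul_smul]

example : True := trivial

theorem responsive_switcher_lyapunov
    {Ω : Type*} [MeasurableSpace Ω] (μ : Measure Ω) [IsProbabilityMeasure μ]
    (T : Ω → Ω) (hT : Ergodic T μ) (e : Ω → Fin 2) (he : Measurable e)
    (s : Fin 2 → ℝ) (hs : ∀ i, s i ∈ Set.Ioc (0 : ℝ) 1) (hss : s 0 * s 1 < 1)
    (henv : ∀ i j : Fin 2, μ {ω | e ω = i ∧ e (T ω) = j}
      = ENNReal.ofReal (envPi s i * envP s i j))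
    (m1 m2 : ℝ) (hm1 : 0 < m1) (hm2 : 0 < m2)
    (d1 d2 : ℝ) (hd1 : d1 ∈ Set.Ico (0 : ℝ) 1) (hd2 : d2 ∈ Set.Ico (0 : ℝ) 1)
    (M : Fin 2 → Matrix (Fin 2) (Fin 2) ℝ)
    (hM : M = ![!![m1, 0; 1 - d1, 0], !![0, m2; 0, 1 - d2]]) :
    ∀ᵐ ω ∂μ, Tendsto (fun n : ℕ =>
        Real.log (matNorm (((List.range n).map (fun k => M (e (T^[k+1] ω)))).prod)) / n)
      atTop (𝓝 ((s 1 * Real.log m1 + s 0 * Real.log (1 - d2)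
        + s 0 * s 1 * Real.log (m2 * (1 - d1) / (m1 * (1 - d2)))) / (s 0 + s 1))) := by
  have hTm : Measurable T := hT.toMeasurePreserving.measurable
  have hd1' : 0 < 1 - d1 := by linarith [hd1.2]
  have hd2' : 0 < 1 - d2 := by linarith [hd2.2]
  have hs0 : 0 < s 0 := (hs 0).1
  have hs1 : 0 < s 1 := (hs 1).1
  have hs0' : s 0 ≤ 1 := (hs 0).2
  have hs1' : s 1 ≤ 1 := (hs 1).2
  -- rank-one decomposition
  set v : Fin 2 → Fin 2 → ℝ := ![![m1, 1 - d1], ![m2, 1 - d2]] with hv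
  set w : Fin 2 → Fin 2 → ℝ := ![![1, 0], ![0, 1]] with hw
  have hMvw : ∀ i, M i = Matrix.vecMulVec (v i) (w i) := by
    intro i
    subst hM
    fin_cases i <;> (ext r c; fin_cases r <;> fin_cases c <;>
      simp [Matrix.vecMulVec_apply, hv, hw])
  set cf : Fin 2 → Fin 2 → ℝ := fun i j => (w i) ⬝ᵥ (v j) with hcf
  have hcval : cf 0 0 = m1 ∧ cf 0 1 = m2 ∧ cf 1 0 = 1 - d1 ∧ cf 1 1 = 1 - d2 := by
    refine ⟨?_, ?_, ?_, ?_⟩ <;> simp [hcf, hv, hw, dotProduct, Fin.sum_univ_two]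
  have hcpos : ∀ i j, 0 < cf i j := by
    simp only [Fin.forall_fin_two]
    exact ⟨⟨hcval.1 ▸ hm1, hcval.2.1 ▸ hm2⟩, ⟨hcval.2.2.1 ▸ hd1', hcval.2.2.2 ▸ hd2'⟩⟩
  set rf : Fin 2 → ℝ := fun i => ∑ j, |v i j| with hrf
  have hrpos : ∀ i, 0 < rf i := by
    simp only [Fin.forall_fin_two, hrf, hv, Fin.sum_univ_two]
    constructor <;> simp <;> positivity
  have hwsum : ∀ i : Fin 2, (∑ j, |w i j|) = 1 := by
    simp only [Fin.forall_fin_two, hw, Fin.sum_univ_two]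
    constructor <;> simp
  -- the Birkhoff observable
  set g : Ω → ℝ := fun σ => Real.log (cf (e (T σ)) (e (T (T σ)))) with hgdef
  have hgm : Measurable g := by
    have h1 : Measurable fun σ => (e (T σ), e (T (T σ))) :=
      (he.comp hTm).prodMk (he.comp (hTm.comp hTm))
    exact (measurable_of_countable fun p : Fin 2 × Fin 2 => Real.log (cf p.1 p.2)).comp h1
  set K : ℝ := |Real.log m1| + |Real.log m2| + |Real.log (1 - d1)| + |Real.log (1 - d2)| with hK
  have hK0 : 0 ≤ K := by positivity
  have hgb : ∀ σ, |g σ| ≤ K := by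
    intro σ
    have habs : ∀ i j : Fin 2, |Real.log (cf i j)| ≤ K := by
      simp only [Fin.forall_fin_two, hcval.1, hcval.2.1, hcval.2.2.1, hcval.2.2.2, hK]
      have a1 := abs_nonneg (Real.log m1)
      have a2 := abs_nonneg (Real.log m2)
      have a3 := abs_nonneg (Real.log (1 - d1))
      have a4 := abs_nonneg (Real.log (1 - d2))
      refine ⟨⟨by linarith, by linarith⟩, by linarith, by linarith⟩
    exact habs _ _
  -- integral of g
  have hsetm : ∀ i j : Fin 2, MeasurableSet {σ : Ω | e σ = i ∧ e (T σ) = j} := by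
    intro i j
    exact (he (measurableSet_singleton i)).inter ((he.comp hTm) (measurableSet_singleton j))
  have hE : ∀ i j : Fin 2, μ {σ : Ω | e (T σ) = i ∧ e (T (T σ)) = j}
      = ENNReal.ofReal (envPi s i * envP s i j) := by
    intro i j
    have hpre : {σ : Ω | e (T σ) = i ∧ e (T (T σ)) = j}
        = T ⁻¹' {σ : Ω | e σ = i ∧ e (T σ) = j} := rfl
    rw [hpre, hT.toMeasurePreserving.measure_preimage (hsetm i j).nullMeasurableSet]
    exact henv i j
  have hEm : ∀ i j : Fin 2, MeasurableSet {σ : Ω | e (T σ) = i ∧ e (T (T σ)) = j} := by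
    intro i j
    exact ((he.comp hTm) (measurableSet_singleton i)).inter
      ((he.comp (hTm.comp hTm)) (measurableSet_singleton j))
  have hnn : ∀ i j : Fin 2, 0 ≤ envPi s i * envP s i j := by
    have h01 : 0 < s 0 + s 1 := by linarith
    simp only [Fin.forall_fin_two, envPi, envP, Matrix.cons_val_zero, Matrix.cons_val_one,
      Matrix.head_cons, Matrix.of_apply, Matrix.cons_val', Matrix.head_fin_const]
    refine ⟨⟨?_, ?_⟩, ?_, ?_⟩
    · exact mul_nonneg (by positivity) (by linarith)
    · positivity
    · positivity
    · exact mul_nonneg (by positivity) (by linarith)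
  have hgsum : g = fun σ => ∑ i, ∑ j,
      Set.indicator {σ' : Ω | e (T σ') = i ∧ e (T (T σ')) = j}
        (fun _ => Real.log (cf i j)) σ := by
    funext σ
    have key : ∀ i₀ j₀ : Fin 2, Real.log (cf i₀ j₀)
        = ∑ i : Fin 2, ∑ j : Fin 2, (if i₀ = i ∧ j₀ = j then Real.log (cf i j) else 0) := by
      simp only [Fin.forall_fin_two, Fin.sum_univ_two]
      norm_num
    simp only [hgdef, Set.indicator_apply, Set.mem_setOf_eq]
    exact key _ _
  have hIg : (∫ σ, g σ ∂μ) = ∑ i : Fin 2, ∑ j : Fin 2,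
      (envPi s i * envP s i j) * Real.log (cf i j) := by
    rw [show (fun σ => g σ) = g from rfl, hgsum]
    rw [integral_finset_sum]
    · refine Finset.sum_congr rfl fun i _ => ?_
      rw [integral_finset_sum]
      · refine Finset.sum_congr rfl fun j _ => ?_
        rw [integral_indicator_const _ (hEm i j), measureReal_def, hE i j, ENNReal.toReal_ofReal (hnn i j),
          smul_eq_mul]
      · exact fun j _ => (integrable_const _).indicator (hEm i j)
    · intro i _
      exact integrable_finset_sum _ fun j _ => (integrable_const _).indicator (hEm i j)
  -- identify the limit value
  have hval : (∫ σ, g σ ∂μ) = (s 1 * Real.log m1 + s 0 * Real.log (1 - d2)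
      + s 0 * s 1 * Real.log (m2 * (1 - d1) / (m1 * (1 - d2)))) / (s 0 + s 1) := by
    rw [hIg]
    have h01 : s 0 + s 1 ≠ 0 := by positivity
    have hlog : Real.log (m2 * (1 - d1) / (m1 * (1 - d2)))
        = Real.log m2 + Real.log (1 - d1) - (Real.log m1 + Real.log (1 - d2)) := by
      rw [Real.log_div (by positivity) (by positivity), Real.log_mul (by positivity)
        (by positivity), Real.log_mul (by positivity) (by positivity)]
    rw [hlog, Fin.sum_univ_two, Fin.sum_univ_two, Fin.sum_univ_two]
    simp only [hcval.1, hcval.2.1, hcval.2.2.1, hcval.2.2.2, envPi, envP,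
      Matrix.cons_val_zero, Matrix.cons_val_one, Matrix.head_cons, Matrix.of_apply,
      Matrix.cons_val', Matrix.head_fin_const]
    field_simp
    ring
  -- Birkhoff
  have hbk := birkhoff_bounded hT hgm hK0 hgb
  filter_upwards [hbk] with ω hω
  rw [hval] at hω
  set I : ℝ := (s 1 * Real.log m1 + s 0 * Real.log (1 - d2)
      + s 0 * s 1 * Real.log (m2 * (1 - d1) / (m1 * (1 - d2)))) / (s 0 + s 1) with hIdef
  -- key product formula
  set a : ℕ → Fin 2 := fun k => e (T^[k+1] ω) with ha
  have hgk : ∀ k : ℕ, g (T^[k] ω) = Real.log (cf (a k) (a (k+1))) := by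
    intro k
    have h1 : T (T^[k] ω) = T^[k+1] ω := (Function.iterate_succ_apply' T k ω).symm
    have h2 : T (T (T^[k] ω)) = T^[k+2] ω := by
      rw [h1, ← Function.iterate_succ_apply' T (k+1) ω]
    simp only [hgdef, h1, h2, ha]
    rw [Function.iterate_succ_apply' T (k+1) ω]
  have key : ∀ n : ℕ,
      Real.log (matNorm (((List.range (n+1)).map (fun k => M (e (T^[k+1] ω)))).prod))
        = birkhoffSum T g n ω + Real.log (rf (a 0)) := by
    intro n
    have hpf := prod_formula M v w hMvw a n
    have hC : (0:ℝ) < ∏ k ∈ Finset.range n, (w (a k)) ⬝ᵥ (v (a (k+1))) :=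
      Finset.prod_pos fun k _ => hcpos (a k) (a (k+1))
    rw [show (fun k => M (e (T^[k+1] ω))) = (fun k => M (a k)) from rfl, hpf,
      matNorm_smul_vecMulVec, hwsum, mul_one, abs_of_pos hC]
    rw [Real.log_mul (ne_of_gt hC) (ne_of_gt (hrpos (a 0))), Real.log_prod
      (fun k _ => ne_of_gt (hcpos (a k) (a (k+1))))]
    congr 1
    rw [birkhoffSum]
    exact Finset.sum_congr rfl fun k _ => (hgk k).symm
  -- final limit manipulation
  set cr : ℝ := Real.log (rf (a 0)) with hcr
  rw [show (fun n : ℕ =>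
      Real.log (matNorm (((List.range n).map (fun k => M (e (T^[k+1] ω)))).prod)) / n)
    = (fun n : ℕ =>
      Real.log (matNorm (((List.range n).map (fun k => M (e (T^[k+1] ω)))).prod)) / n) from rfl]
  rw [← tendsto_add_atTop_iff_nat 1]
  have heq : ∀ᶠ n : ℕ in atTop,
      (birkhoffSum T g n ω / n) * ((n:ℝ)/((n:ℝ)+1)) + cr/((n:ℝ)+1)
      = Real.log (matNorm (((List.range (n+1)).map (fun k => M (e (T^[k+1] ω)))).prod))
          / ((n+1 : ℕ) : ℝ) := by
    filter_upwards [eventually_ge_atTop 1] with n hn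
    have hn0 : ((n:ℝ)) ≠ 0 := by
      have : (1:ℝ) ≤ n := by exact_mod_cast hn
      linarith
    have hn1 : ((n:ℝ) + 1) ≠ 0 := by positivity
    rw [key n]
    push_cast
    field_simp
    try ring
  have hquot : Tendsto (fun n : ℕ => (n:ℝ)/((n:ℝ)+1)) atTop (𝓝 1) := by
    have h0 : Tendsto (fun n : ℕ => 1 / ((n:ℝ) + 1)) atTop (𝓝 0) :=
      tendsto_one_div_add_atTop_nhds_zero_nat
    have h1 : Tendsto (fun n : ℕ => 1 - 1/((n:ℝ)+1)) atTop (𝓝 (1 - 0)) :=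
      tendsto_const_nhds.sub h0
    rw [sub_zero] at h1
    refine h1.congr fun n => ?_
    have hn1 : ((n:ℝ) + 1) ≠ 0 := by positivity
    field_simp
    ring
  have hconst : Tendsto (fun n : ℕ => cr/((n:ℝ)+1)) atTop (𝓝 0) := by
    have := tendsto_const_div_atTop_nhds_zero_nat cr
    rw [← tendsto_add_atTop_iff_nat 1] at this
    refine this.congr fun n => ?_
    push_cast
    ring_nf
  have hmain : Tendsto (fun n : ℕ =>
      (birkhoffSum T g n ω / n) * ((n:ℝ)/((n:ℝ)+1)) + cr/((n:ℝ)+1)) atTop (𝓝 (I * 1 + 0)) :=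
    (hω.mul hquot).add hconst
  rw [mul_one, add_zero] at hmain
  exact hmain.congr' heq
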